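/- Suppose M₁M₂ = 0, M₂M₃ = 0, ker(M₃) = 0 (as a map S³ → S⁸), the columns of M₂ generate the syzygies of M₁, the columns of M₃ generate the syzygies of M₂, and F is a nonzerodivisor on S/(image of M₁ᵀ). Then the complex 0 → S³ → S³⊕S⁸ → S⁸⊕S⁶ → S⁶⊕S → S given by M′₄, M′₃, M′₂, M′₁ (as in the paper's Theorem 4) is exact at every spot except the rightmost. -/

import Mathlib

/-- Mapping-cone block matrices associated to multiplication by `F`. -/
noncomputable def M'1 {S : Type*} [CommRing S] (F : S)
    (M1 : Matrix (Fin 1) (Fin 6) S) : Matrix (Fin 1) (Fin 6 ⊕ Fin 1) S :=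
  Matrix.fromCols M1 (F • (1 : Matrix (Fin 1) (Fin 1) S))

noncomputable def M'2 {S : Type*} [CommRing S] (F : S)
    (M1 : Matrix (Fin 1) (Fin 6) S) (M2 : Matrix (Fin 6) (Fin 8) S) :
    Matrix (Fin 6 ⊕ Fin 1) (Fin 8 ⊕ Fin 6) S :=
  Matrix.fromBlocks M2 (-(F • (1 : Matrix (Fin 6) (Fin 6) S))) 0 M1

noncomputable def M'3 {S : Type*} [CommRing S] (F : S)
    (M2 : Matrix (Fin 6) (Fin 8) S) (M3 : Matrix (Fin 8) (Fin 3) S) :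
    Matrix (Fin 8 ⊕ Fin 6) (Fin 3 ⊕ Fin 8) S :=
  Matrix.fromBlocks M3 (F • (1 : Matrix (Fin 8) (Fin 8) S)) 0 M2

noncomputable def M'4 {S : Type*} [CommRing S] (F : S)
    (M3 : Matrix (Fin 8) (Fin 3) S) : Matrix (Fin 3 ⊕ Fin 8) (Fin 3) S :=
  Matrix.fromRows (-(F • (1 : Matrix (Fin 3) (Fin 3) S))) M3

section Aux
variable {S : Type*} [CommRing S]

lemma smul_one_mulVec {n : Type*} [Fintype n] [DecidableEq n] (F : S) (x : n → S) :
    (F • (1 : Matrix n n S)).mulVec x = F • x := by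
  rw [Matrix.smul_mulVec, Matrix.one_mulVec]

omit [CommRing S] in
lemma elim_eq_iff {α β : Type*} (a x : α → S) (b y : β → S) :
    Sum.elim a b = Sum.elim x y ↔ a = x ∧ b = y := by
  constructor
  · intro h
    exact ⟨funext fun i => congrFun h (Sum.inl i), funext fun i => congrFun h (Sum.inr i)⟩
  · rintro ⟨rfl, rfl⟩; rfl

omit [CommRing S] in
lemma sum_elim_decomp {α β : Type*} (v : α ⊕ β → S) :
    v = Sum.elim (v ∘ Sum.inl) (v ∘ Sum.inr) := by
  funext i; cases i <;> rfl

end Aux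

theorem mapping_cone_exact {S : Type*} [CommRing S] [IsNoetherianRing S] (F : S)
    (M1 : Matrix (Fin 1) (Fin 6) S) (M2 : Matrix (Fin 6) (Fin 8) S)
    (M3 : Matrix (Fin 8) (Fin 3) S)
    (h12 : M1 * M2 = 0) (h23 : M2 * M3 = 0)
    (hker3 : ∀ c : Fin 3 → S, M3.mulVec c = 0 → c = 0)
    (hsyz1 : ∀ v : Fin 6 → S, M1.mulVec v = 0 → ∃ c : Fin 8 → S, v = M2.mulVec c)
    (hsyz2 : ∀ v : Fin 8 → S, M2.mulVec v = 0 → ∃ c : Fin 3 → S, v = M3.mulVec c)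
    (hF : ∀ x : S, F * x ∈ Ideal.span (Set.range fun j => M1 0 j) →
      x ∈ Ideal.span (Set.range fun j => M1 0 j)) :
    (∀ w : Fin 3 → S, (M'4 F M3).mulVec w = 0 → w = 0) ∧
    (∀ v : Fin 3 ⊕ Fin 8 → S, (M'3 F M2 M3).mulVec v = 0 →
      ∃ w : Fin 3 → S, v = (M'4 F M3).mulVec w) ∧
    (∀ v : Fin 8 ⊕ Fin 6 → S, (M'2 F M1 M2).mulVec v = 0 →
      ∃ w : Fin 3 ⊕ Fin 8 → S, v = (M'3 F M2 M3).mulVec w) ∧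
    (∀ v : Fin 6 ⊕ Fin 1 → S, (M'1 F M1).mulVec v = 0 →
      ∃ w : Fin 8 ⊕ Fin 6 → S, v = (M'2 F M1 M2).mulVec w) := by
  refine ⟨?_, ?_, ?_, ?_⟩
  · intro w hw
    rw [M'4, Matrix.fromRows_mulVec] at hw
    have h3 : M3.mulVec w = 0 := funext fun i => congrFun hw (Sum.inr i)
    exact hker3 w h3
  · intro v hv
    obtain ⟨a, b, rfl⟩ : ∃ a b, v = Sum.elim a b := ⟨_, _, sum_elim_decomp v⟩
    rw [M'3, Matrix.fromBlocks_mulVec] at hv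
    simp only [Sum.elim_comp_inl, Sum.elim_comp_inr, smul_one_mulVec,
      Matrix.zero_mulVec, zero_add] at hv
    have htop : M3.mulVec a + F • b = 0 := funext fun i => congrFun hv (Sum.inl i)
    have hbot : M2.mulVec b = 0 := funext fun i => congrFun hv (Sum.inr i)
    obtain ⟨c, hc⟩ := hsyz2 b hbot
    have hac : a = -(F • c) := by
      have : M3.mulVec (a + F • c) = 0 := by
        rw [Matrix.mulVec_add, Matrix.mulVec_smul, ← hc, htop]
      exact eq_neg_of_add_eq_zero_left (hker3 _ this)
    refine ⟨c, ?_⟩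
    rw [M'4, Matrix.fromRows_mulVec, Matrix.neg_mulVec, smul_one_mulVec, ← hc, hac]
  · intro v hv
    obtain ⟨a, b, rfl⟩ : ∃ a b, v = Sum.elim a b := ⟨_, _, sum_elim_decomp v⟩
    rw [M'2, Matrix.fromBlocks_mulVec] at hv
    simp only [Sum.elim_comp_inl, Sum.elim_comp_inr, Matrix.neg_mulVec, smul_one_mulVec,
      Matrix.zero_mulVec, zero_add] at hv
    have htop : M2.mulVec a + -(F • b) = 0 := funext fun i => congrFun hv (Sum.inl i)
    have hbot : M1.mulVec b = 0 := funext fun i => congrFun hv (Sum.inr i)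
    obtain ⟨d, hd⟩ := hsyz1 b hbot
    have h0 : M2.mulVec (a - F • d) = 0 := by
      rw [Matrix.mulVec_sub, Matrix.mulVec_smul, ← hd, sub_eq_add_neg]
      exact htop
    obtain ⟨c, hc⟩ := hsyz2 _ h0
    refine ⟨Sum.elim c d, ?_⟩
    rw [M'3, Matrix.fromBlocks_mulVec]
    simp only [Sum.elim_comp_inl, Sum.elim_comp_inr, smul_one_mulVec,
      Matrix.zero_mulVec, zero_add]
    rw [elim_eq_iff]
    exact ⟨by rw [← hc]; abel, hd⟩
  · intro v hv
    obtain ⟨a, b, rfl⟩ : ∃ a b, v = Sum.elim a b := ⟨_, _, sum_elim_decomp v⟩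
    rw [M'1, Matrix.fromCols_mulVec_sumElim, smul_one_mulVec] at hv
    have heq : (M1.mulVec a) 0 + F * b 0 = 0 := by
      have := congrFun hv 0
      simpa using this
    have hmem : F * b 0 ∈ Ideal.span (Set.range fun j => M1 0 j) := by
      have hA : (M1.mulVec a) 0 = ∑ j, M1 0 j * a j := rfl
      have key : F * b 0 = ∑ j, (-(a j)) * M1 0 j :=
        calc F * b 0 = -(M1.mulVec a 0) := eq_neg_of_add_eq_zero_right heq
        _ = -(∑ j, M1 0 j * a j) := by rw [hA]
        _ = ∑ j, (-(a j)) * M1 0 j := by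
            rw [← Finset.sum_neg_distrib]
            exact Finset.sum_congr rfl fun j _ => by ring
      rw [key]
      exact Ideal.sum_mem _ fun j _ => Ideal.mul_mem_left _ _
        (Ideal.subset_span ⟨j, rfl⟩)
    have hb := hF _ hmem
    rw [Ideal.mem_span_range_iff_exists_fun] at hb
    obtain ⟨d, hdsum⟩ := hb
    have hbd : b = M1.mulVec d := by
      funext i
      have hi : i = 0 := Subsingleton.elim i 0
      subst hi
      rw [← hdsum]
      simp [Matrix.mulVec, dotProduct, mul_comm]
    have h0 : M1.mulVec (a + F • d) = 0 := by
      rw [Matrix.mulVec_add, Matrix.mulVec_smul, ← hbd]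
      funext i
      have hi : i = 0 := Subsingleton.elim i 0
      subst hi
      simpa [add_comm] using heq
    obtain ⟨c, hc⟩ := hsyz1 _ h0
    refine ⟨Sum.elim c d, ?_⟩
    rw [M'2, Matrix.fromBlocks_mulVec]
    simp only [Sum.elim_comp_inl, Sum.elim_comp_inr, Matrix.neg_mulVec, smul_one_mulVec,
      Matrix.zero_mulVec, zero_add]
    rw [elim_eq_iff]
    refine ⟨?_, hbd⟩
    rw [← hc]
    abel
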